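/- For every nonzero integer n, with s_n := |Θ_i|²/(−|n|·α_i + i·n·β_i), c⁺_n := Θ_o/(Θ_o + R^{2n}·Θ̄_o) and c⁻_n := Θ̄_o/(Θ̄_o + R^{−2n}·Θ_o), one has the identity −(1/|Θ_o|²)·( α_o·n·(c⁺_n − c⁻_n) − i·n·β_o )·s_n = l_n, i.e. applying the outer boundary operator to the annulus solution whose Dirichlet datum is the trace of the disc solution produces exactly the multiplier l_n of equation (36A). -/

import Mathlib

open Complex

set_option maxHeartbeats 1600000

/-- Applying the outer boundary operator
`−(1/|Θ_o|²)·(α_o·∂_r − β_o·∂_θ)` at the unit circle to the annulus solution whose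
Dirichlet datum is the trace `s_n·e^{inθ}` of the disc solution produces exactly the
multiplier `l_n` of equation (36A):
`−(1/|Θ_o|²)·(α_o·n·(c⁺_n − c⁻_n) − i·n·β_o)·s_n = l_n`. -/
theorem statement2 (αi αo βi βo R : ℝ)
    (hαi : 0 < αi) (hαo : 0 < αo) (hβi : 0 ≤ βi) (hβo : 0 ≤ βo) (hR : 2 ≤ R)
    (Θi Θo : ℂ) (hΘi : Θi = (αi : ℂ) + (βi : ℂ) * I)
    (hΘo : Θo = (αo : ℂ) + (βo : ℂ) * I)
    (n : ℤ) (hn : n ≠ 0) :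
    -(1 / ((‖Θo‖ ^ 2 : ℝ) : ℂ)) *
      ((αo : ℂ) * (n : ℂ) *
          (Θo / (Θo + ((R ^ (2 * n) : ℝ) : ℂ) * (starRingEnd ℂ) Θo)
            - (starRingEnd ℂ) Θo / ((starRingEnd ℂ) Θo + ((R ^ (-(2 * n)) : ℝ) : ℂ) * Θo))
        - I * (n : ℂ) * (βo : ℂ)) *
      (((‖Θi‖ ^ 2 : ℝ) : ℂ) / (((-(|n| : ℝ) * αi : ℝ) : ℂ) + I * (n : ℂ) * (βi : ℂ)))
    = (((1 - R ^ (2 * n)) * ‖Θi‖ ^ 2 : ℝ) : ℂ) /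
        (((n.sign : ℂ) * (αi : ℂ) - (βi : ℂ) * I) *
          (Θo + ((R ^ (2 * n) : ℝ) : ℂ) * (starRingEnd ℂ) Θo)) := by
  have hR0 : (0:ℝ) < R := lt_of_lt_of_le two_pos hR
  obtain ⟨r, hr, hrR⟩ : ∃ r : ℝ, 0 < r ∧ R ^ (2*n) = r := ⟨_, zpow_pos hR0 _, rfl⟩
  have hrneg : R ^ (-(2*n)) = r⁻¹ := by rw [zpow_neg, hrR]
  rw [hrneg, hrR]
  have habsn : (|n| : ℤ) = n.sign * n := by
    rcases lt_trichotomy n 0 with h | h | h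
    · simp [Int.sign_eq_neg_one_of_neg h, abs_of_neg h]
    · exact absurd h hn
    · simp [Int.sign_eq_one_of_pos h, abs_of_pos h]
  have hsign : n.sign = 1 ∨ n.sign = -1 := by
    rcases lt_trichotomy n 0 with h | h | h
    · exact Or.inr (Int.sign_eq_neg_one_of_neg h)
    · exact absurd h hn
    · exact Or.inl (Int.sign_eq_one_of_pos h)
  have hconj : (starRingEnd ℂ) Θo = (αo:ℂ) - (βo:ℂ) * I := by
    simp [hΘo, Complex.conj_ofReal]; ring
  have hαo' : (αo:ℂ) = (Θo + (starRingEnd ℂ) Θo) / 2 := by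
    rw [hconj, hΘo]; ring
  have h2 : Θo - (starRingEnd ℂ) Θo = 2*(βo:ℂ)*I := by
    rw [hconj, hΘo]; ring
  have hIβo : I * (n:ℂ) * (βo:ℂ) = (n:ℂ) * (Θo - (starRingEnd ℂ) Θo) / 2 := by
    rw [h2]; ring
  have hABo : ((‖Θo‖ ^ 2 : ℝ) : ℂ) = Θo * (starRingEnd ℂ) Θo := by
    rw [Complex.sq_norm, Complex.mul_conj]
  -- nonzeroness
  have hΘo0 : Θo ≠ 0 := by
    rw [hΘo]
    intro h
    have := congrArg Complex.re h
    simp at this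
    exact absurd this hαo.ne'
  have hcΘo0 : (starRingEnd ℂ) Θo ≠ 0 := by simpa using hΘo0
  have hden1 : Θo + ((r:ℝ):ℂ) * (starRingEnd ℂ) Θo ≠ 0 := by
    intro h
    have := congrArg Complex.re h
    simp [hΘo, hconj] at this
    nlinarith [hr, hαo]
  have hden2 : (starRingEnd ℂ) Θo + ((r⁻¹:ℝ):ℂ) * Θo ≠ 0 := by
    intro h
    have := congrArg Complex.re h
    simp [hΘo, hconj] at this
    nlinarith [inv_pos.mpr hr, hαo]
  have hn' : (n:ℂ) ≠ 0 := Int.cast_ne_zero.mpr hn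
  have hsgn0 : ((n.sign:ℝ)) ≠ 0 := by
    rcases hsign with h | h <;> simp [h]
  have hd2 : ((n.sign : ℂ) * (αi : ℂ) - (βi : ℂ) * I) ≠ 0 := by
    intro h
    have := congrArg Complex.re h
    simp at this
    rcases this with h' | h'
    · exact hn (by exact_mod_cast h')
    · exact hαi.ne' h'
  have hr0 : ((r:ℝ):ℂ) ≠ 0 := by exact_mod_cast hr.ne'
  have hsden : (((-(|n| : ℝ) * αi : ℝ) : ℂ) + I * (n : ℂ) * (βi : ℂ)) =
      -(n:ℂ) * ((n.sign : ℂ) * (αi : ℂ) - (βi : ℂ) * I) := by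
    have : |(n:ℝ)| = ((n.sign : ℤ):ℝ) * ((n:ℤ):ℝ) := by
      rw [← Int.cast_mul, ← habsn, Int.cast_abs]
    push_cast [this]
    ring
  have hrinvc : ((r⁻¹:ℝ):ℂ) = ((r:ℝ):ℂ)⁻¹ := by push_cast; ring
  have hc : Θo / (Θo + ((r:ℝ):ℂ) * (starRingEnd ℂ) Θo)
      - (starRingEnd ℂ) Θo / ((starRingEnd ℂ) Θo + ((r⁻¹:ℝ):ℂ) * Θo)
      = (Θo - ((r:ℝ):ℂ) * (starRingEnd ℂ) Θo) / (Θo + ((r:ℝ):ℂ) * (starRingEnd ℂ) Θo) := by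
    rw [hrinvc] at hden2 ⊢
    have e1 : (starRingEnd ℂ) Θo + (((r:ℝ):ℂ))⁻¹ * Θo
        = (((r:ℝ):ℂ))⁻¹ * (Θo + ((r:ℝ):ℂ) * (starRingEnd ℂ) Θo) := by
      rw [mul_add, ← mul_assoc, inv_mul_cancel₀ hr0, one_mul, add_comm]
    rw [e1, div_mul_eq_div_div, div_eq_mul_inv ((starRingEnd ℂ) Θo) ((r:ℝ):ℂ)⁻¹, inv_inv, div_sub_div_same]
    ring_nf
  rw [hsden, hc, hIβo, hαo', hABo]
  have hbr : (Θo + (starRingEnd ℂ) Θo) / 2 * (n:ℂ) *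
        ((Θo - ((r:ℝ):ℂ) * (starRingEnd ℂ) Θo) / (Θo + ((r:ℝ):ℂ) * (starRingEnd ℂ) Θo))
      - (n:ℂ) * (Θo - (starRingEnd ℂ) Θo) / 2
      = (n:ℂ) * (1 - ((r:ℝ):ℂ)) * (Θo * (starRingEnd ℂ) Θo) /
          (Θo + ((r:ℝ):ℂ) * (starRingEnd ℂ) Θo) := by
    have hden1' : Θo + (starRingEnd ℂ) Θo * ((r:ℝ):ℂ) ≠ 0 := by rwa [mul_comm] at hden1
    field_simp
    ring
  rw [hbr]
  have hcast : (((1 - r) * ‖Θi‖ ^ 2 : ℝ) : ℂ)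
      = (1 - ((r:ℝ):ℂ)) * ((‖Θi‖ ^ 2 : ℝ) : ℂ) := by push_cast; ring
  rw [hcast]
  have hden1' : Θo + (starRingEnd ℂ) Θo * ((r:ℝ):ℂ) ≠ 0 := by rwa [mul_comm] at hden1
  field_simp
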